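/- In the PCS X = (!1 ⊸ 1) of power series f(u) = ∑_n s_n uⁿ with ∑_n s_n ≤ 1 on [0,1], ordered by s ⊑ t iff f_s(u) ≤ f_t(u) for all u ∈ [0,1]: the sequence e(n) of monomials uⁿ (i.e., e(n)_i = δ_{n,i}) is ⊑-decreasing (e(n+1) ⊑ e(n)), its pointwise infimum over the coefficients is 0, yet inf_n f_{e(n)}(1) = 1; moreover the e(n) are pairwise ≤-unbounded in the coefficientwise order (each is ≤-maximal among sequences with ∑ s_n ≤ 1). -/

import Mathlib

open scoped ENNReal

noncomputable section

/-- The `n`-th "monomial" element of `P(!1 ⊸ 1)`: the coefficient sequence of `u ^ n`. -/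
def eMon (n : ℕ) : ℕ → ℝ≥0∞ := fun i => if i = n then 1 else 0

/-- The power series associated with a coefficient sequence `s`. -/
def fSer (s : ℕ → ℝ≥0∞) (u : ℝ≥0∞) : ℝ≥0∞ := ∑' i, s i * u ^ i

lemma fSer_eMon (n : ℕ) (u : ℝ≥0∞) : fSer (eMon n) u = u ^ n := by
  unfold fSer eMon
  rw [tsum_eq_single n]
  · simp
  · intro i hi; simp [hi]

theorem stmt17 :
    (∀ n : ℕ, ∀ u : ℝ≥0∞, u ≤ 1 → fSer (eMon (n + 1)) u ≤ fSer (eMon n) u) ∧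
    (∀ i : ℕ, (⨅ n, eMon n i) = 0) ∧
    ((⨅ n, fSer (eMon n) 1) = 1) ∧
    (∀ n : ℕ, ∀ t : ℕ → ℝ≥0∞, (∑' i, t i) ≤ 1 → eMon n ≤ t → eMon n = t) := by
  refine ⟨?_, ?_, ?_, ?_⟩
  · intro n u hu
    rw [fSer_eMon, fSer_eMon]
    exact pow_le_pow_of_le_one zero_le hu (Nat.le_succ n)
  · intro i
    refine le_antisymm ?_ zero_le
    refine le_trans (iInf_le _ (i + 1)) ?_
    simp [eMon]
  · simp [fSer_eMon]
  · intro n t ht hle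
    have hn : t n = 1 := by
      have h1 : (1 : ℝ≥0∞) ≤ t n := by simpa [eMon] using hle n
      have h2 : t n ≤ 1 := le_trans (ENNReal.le_tsum n) ht
      exact le_antisymm h2 h1
    funext i
    by_cases hi : i = n
    · simp [eMon, hi, hn]
    · simp only [eMon, if_neg hi]
      by_contra h
      have hpos : 0 < t i := pos_iff_ne_zero.mpr fun h0 => h h0.symm
      have hsum : t n + t i ≤ ∑' j, t j := by
        have := Summable.sum_le_tsum (f := t) (s := ({n, i} : Finset ℕ)) (fun _ _ => zero_le) ENNReal.summable
        rwa [Finset.sum_insert (by simp [Ne.symm hi]), Finset.sum_singleton] at this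
      rw [hn] at hsum
      have : (1 : ℝ≥0∞) + t i ≤ 1 := le_trans hsum ht
      have h0 : t i ≤ 0 := by
        have h1 : (1:ℝ≥0∞) + t i ≤ 1 + 0 := by simpa using this
        exact (ENNReal.add_le_add_iff_left ENNReal.one_ne_top).mp h1
      exact absurd h0 hpos.not_ge
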